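/- Let τ : D₁ → D₂ be a natural transformation between two cofiltered diagrams (over the same index category) in the category of compact Hausdorff spaces. If every component τᵢ : D₁(i) → D₂(i) is surjective, then the induced map between the limits, lim τ : lim D₁ → lim D₂, is surjective. -/

import Mathlib

open CategoryTheory Limits

attribute [local instance] CategoryTheory.ConcreteCategory.instFunLike

/-- If `τ : D₁ ⟶ D₂` is a natural transformation between cofiltered diagrams of
compact Hausdorff spaces with all components surjective, then the induced map
between the limits is surjective. -/
theorem surjective_limMap_of_surjective
    {I : Type u} [SmallCategory I] [IsCofiltered I]
    (D₁ D₂ : I ⥤ CompHaus.{u}) (τ : D₁ ⟶ D₂)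
    (hsurj : ∀ i : I, Function.Surjective (τ.app i)) :
    Function.Surjective (limMap τ) := by
  intro y
  -- the fibers of the components over the coordinates of `y`
  let S : ∀ i, Set (D₁.obj i) := fun i => τ.app i ⁻¹' {limit.π D₂ i y}
  have hnat : ∀ {i j : I} (f : i ⟶ j) (x : D₁.obj i),
      τ.app j (D₁.map f x) = D₂.map f (τ.app i x) := by
    intro i j f x
    rw [← comp_apply, ← comp_apply, NatTrans.naturality]
  have hy : ∀ {i j : I} (f : i ⟶ j), D₂.map f (limit.π D₂ i y) = limit.π D₂ j y := by
    intro i j f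
    rw [← comp_apply, limit.w]
  have hmap : ∀ {i j : I} (f : i ⟶ j) (x : D₁.obj i), x ∈ S i → D₁.map f x ∈ S j := by
    intro i j f x hx
    simp only [S, Set.mem_preimage, Set.mem_singleton_iff] at hx ⊢
    rw [hnat f x, hx, hy f]
  -- the diagram of fibers, as a diagram in `TopCat`
  let F : I ⥤ TopCat.{u} :=
    { obj := fun i => TopCat.of (S i)
      map := fun {i j} f =>
        TopCat.ofHom ⟨fun x => ⟨D₁.map f x.1, hmap f x.1 x.2⟩, by
          apply Continuous.subtype_mk
          exact (ConcreteCategory.hom (D₁.map f)).continuous.comp continuous_subtype_val⟩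
      map_id := by
        intro i
        ext x
        simp
      map_comp := by
        intro i j k f g
        ext x
        simp }
  have hcl : ∀ i, IsClosed (S i) := fun i =>
    (@isClosed_singleton _ _ (haveI := (D₂.obj i).is_hausdorff; T2Space.t1Space) _).preimage (ConcreteCategory.hom (τ.app i)).continuous
  haveI : ∀ i, Nonempty (F.obj i) := fun i => by
    obtain ⟨x, hx⟩ := hsurj i (limit.π D₂ i y)
    exact ⟨⟨x, hx⟩⟩
  haveI : ∀ i, CompactSpace (F.obj i) := fun i =>
    isCompact_iff_compactSpace.mp ((hcl i).isCompact)
  haveI : ∀ i, T2Space (F.obj i) := fun i => inferInstanceAs (T2Space (S i))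
  obtain ⟨u⟩ := TopCat.nonempty_limitCone_of_compact_t2_cofiltered_system.{u, u} F
  -- `u` is a compatible family of points in the fibers; assemble it into a section of `D₁`
  have hu : ∀ {i j : I} (f : i ⟶ j), D₁.map f (u.1 i).1 = (u.1 j).1 := by
    intro i j f
    exact congrArg Subtype.val (u.2 f)
  let s : (D₁ ⋙ forget CompHaus).sections :=
    ⟨fun i => (u.1 i).1, fun {i j} f => hu f⟩
  let x : (limit D₁ : CompHaus) :=
    (preservesLimitIso (forget CompHaus) D₁).inv
      ((Types.limitEquivSections (D₁ ⋙ forget CompHaus)).symm s)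
  have hx : ∀ i, limit.π D₁ i x = (u.1 i).1 := by
    intro i
    have h1 := ConcreteCategory.congr_hom (preservesLimitIso_inv_π (forget CompHaus) D₁ i)
      ((Types.limitEquivSections (D₁ ⋙ forget CompHaus)).symm s)
    have h2 := Types.limitEquivSections_symm_apply (D₁ ⋙ forget CompHaus) s i
    exact h1.trans h2
  refine ⟨x, ?_⟩
  apply Concrete.limit_ext (C := CompHaus) D₂
  intro i
  rw [← comp_apply, limMap_π, comp_apply, hx i]
  exact (u.1 i).2
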